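/- Let k ∈ ℕ with k ≥ 1, let I = { m/k − 1/(2k) : m ∈ {1,…,k} }, and for b = m/k − 1/(2k) ∈ I let I(b) = [(m−1)/k, m/k) denote the subinterval of [0,1] of length 1/k containing b. Let R be a Markov kernel from [0,1] to [0,1], and for a, b ∈ I set p_{a,b} = R(a)(I(b)). Let X be uniform on I and, conditionally on X = a, let Y ~ R(a). Then E[(Y − X)²] ≥ Σ_{b ∈ I} min{ (1 − p_{b,b})/(4k³), (1/48)·(1 − 1/k²)·min_{a ∈ I} p_{a,b} }. -/

import Mathlib

open MeasureTheory ProbabilityTheory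
open scoped ENNReal

/-- Let `I = {m/k − 1/(2k) : m ∈ {1,…,k}}` be the midpoints of the `k`
subintervals of `[0,1]` of length `1/k`, `I(b) = [(m−1)/k, m/k)` the subinterval containing
the midpoint `b = m/k − 1/(2k)`, and `R` a Markov kernel from `[0,1]` to `[0,1]`, with
`p_{a,b} = R(a)(I(b))`.  If `X` is uniform on `I` and, given `X = a`, `Y ~ R(a)`, then
`E[(Y − X)²] ≥ Σ_{b ∈ I} min {(1 − p_{b,b})/(4k³), (1/48)(1 − 1/k²) min_{a ∈ I} p_{a,b}}`. -/
theorem stmt5 (k : ℕ) (hk : 1 ≤ k)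
    (R : Kernel ℝ ℝ) [IsMarkovKernel R] (hR : ∀ x, R x (Set.Icc 0 1) = 1)
    (mid : ℕ → ℝ) (hmid : ∀ m, mid m = (m : ℝ) / k - 1 / (2 * k))
    (intv : ℕ → Set ℝ) (hintv : ∀ m, intv m = Set.Ico (((m : ℝ) - 1) / k) ((m : ℝ) / k))
    (μI : Measure ℝ)
    (hμI : μI = (k : ℝ≥0∞)⁻¹ • ∑ m ∈ Finset.Icc 1 k, Measure.dirac (mid m)) :
    ∑ m ∈ Finset.Icc 1 k,
        min ((1 - (R (mid m) (intv m)).toReal) / (4 * (k : ℝ) ^ 3))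
          ((1 / 48) * (1 - 1 / (k : ℝ) ^ 2) *
            (Finset.Icc 1 k).inf' (Finset.nonempty_Icc.mpr hk)
              (fun a => (R (mid a) (intv m)).toReal))
      ≤ ∫ p : ℝ × ℝ, (p.2 - p.1) ^ 2 ∂(μI.compProd R) := by
  have hk0 : (0:ℝ) < k := by exact_mod_cast hk
  -- the complement of [0,1] is null for each R x
  have hnull : ∀ x, R x (Set.Icc (0:ℝ) 1)ᶜ = 0 := by
    intro x
    have h := measure_compl (μ := R x) (s := Set.Icc (0:ℝ) 1) measurableSet_Icc
      (measure_ne_top _ _)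
    rw [hR x, measure_univ, tsub_self] at h
    exact h
  have hae : ∀ x, ∀ᵐ y ∂(R x), y ∈ Set.Icc (0:ℝ) 1 := by
    intro x
    rw [Filter.eventually_iff, mem_ae_iff]
    show R x {y | y ∈ Set.Icc (0:ℝ) 1}ᶜ = 0
    simpa only [Set.setOf_mem_eq] using hnull x
  -- midpoints lie in [0,1]
  have hmidmem : ∀ m ∈ Finset.Icc 1 k, mid m ∈ Set.Icc (0:ℝ) 1 := by
    intro m hm
    simp only [Finset.mem_Icc] at hm
    have h1 : (1:ℝ) ≤ m := by exact_mod_cast hm.1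
    have h2 : (m:ℝ) ≤ k := by exact_mod_cast hm.2
    rw [hmid]
    constructor
    · rw [sub_nonneg, div_le_div_iff₀ (by positivity) hk0]
      nlinarith
    · have hmk : (m:ℝ)/k ≤ 1 := by rw [div_le_one hk0]; exact h2
      have : (0:ℝ) < 1/(2*k) := by positivity
      linarith
  set g : ℕ → ℝ≥0∞ := fun m => ∫⁻ y, ENNReal.ofReal ((y - mid m)^2) ∂(R (mid m)) with hg
  -- upper bound: g m ≤ 1
  have hgle : ∀ m ∈ Finset.Icc 1 k, g m ≤ 1 := by
    intro m hm
    have hmem := hmidmem m hm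
    calc g m ≤ ∫⁻ _, 1 ∂(R (mid m)) := by
          apply lintegral_mono_ae
          filter_upwards [hae (mid m)] with y hy
          rw [ENNReal.ofReal_le_one]
          nlinarith [hy.1, hy.2, hmem.1, hmem.2]
      _ = 1 := by simp
  have hgne : ∀ m ∈ Finset.Icc 1 k, g m ≠ ⊤ :=
    fun m hm => ne_top_of_le_ne_top ENNReal.one_ne_top (hgle m hm)
  -- lower bound: g m ≥ (1/(4k²)) (1 - p_{m,m})
  have hglb : ∀ m ∈ Finset.Icc 1 k,
      ENNReal.ofReal (1/(4*(k:ℝ)^2)) * (1 - R (mid m) (intv m)) ≤ g m := by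
    intro m hm
    simp only [Finset.mem_Icc] at hm
    have h1 : (1:ℝ) ≤ m := by exact_mod_cast hm.1
    have h2 : (m:ℝ) ≤ k := by exact_mod_cast hm.2
    set S := Set.Icc (0:ℝ) 1 \ intv m with hSdef
    have hsub : intv m ⊆ Set.Icc (0:ℝ) 1 := by
      rw [hintv]
      intro y hy
      obtain ⟨hy1, hy2⟩ := hy
      have ha : (0:ℝ) ≤ ((m:ℝ)-1)/k := div_nonneg (by linarith) (le_of_lt hk0)
      have hb : (m:ℝ)/k ≤ 1 := by rw [div_le_one hk0]; exact h2
      exact ⟨by linarith, by linarith⟩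
    have hS : R (mid m) S = 1 - R (mid m) (intv m) := by
      have h := measure_diff (μ := R (mid m)) hsub
        (by rw [hintv]; exact measurableSet_Ico.nullMeasurableSet) (measure_ne_top _ _)
      rwa [hR (mid m)] at h
    have hpt : ∀ y ∈ S, ENNReal.ofReal (1/(4*(k:ℝ)^2)) ≤ ENNReal.ofReal ((y - mid m)^2) := by
      intro y hy
      apply ENNReal.ofReal_le_ofReal
      obtain ⟨hyI, hyn⟩ := hy
      rw [hintv, Set.mem_Ico, not_and_or, not_le, not_lt] at hyn
      have hke : (0:ℝ) < 1/(2*(k:ℝ)) := by positivity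
      have hsq : (1/(2*(k:ℝ)))^2 = 1/(4*(k:ℝ)^2) := by
        field_simp; ring
      rw [← hsq, hmid]
      have hdd : ((m:ℝ))/k - ((m:ℝ)-1)/k = 1/k := by field_simp; ring
      rcases hyn with h | h
      · -- y < (m-1)/k, so mid - y > 1/(2k)
        have hd : 1/(2*(k:ℝ)) ≤ ((m:ℝ)/k - 1/(2*k)) - y := by
          have h1k : (1:ℝ)/k - 1/(2*k) = 1/(2*k) := by field_simp; ring
          nlinarith
        calc (1/(2*(k:ℝ)))^2 ≤ (((m:ℝ)/k - 1/(2*k)) - y)^2 :=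
              pow_le_pow_left₀ (le_of_lt hke) hd 2
          _ = (y - ((m:ℝ)/k - 1/(2*k)))^2 := by ring
      · -- m/k ≤ y, so y - mid ≥ 1/(2k)
        have hd : 1/(2*(k:ℝ)) ≤ y - ((m:ℝ)/k - 1/(2*k)) := by linarith
        exact pow_le_pow_left₀ (le_of_lt hke) hd 2
    calc ENNReal.ofReal (1/(4*(k:ℝ)^2)) * (1 - R (mid m) (intv m))
        = ENNReal.ofReal (1/(4*(k:ℝ)^2)) * R (mid m) S := by rw [hS]
      _ = ∫⁻ _ in S, ENNReal.ofReal (1/(4*(k:ℝ)^2)) ∂(R (mid m)) := by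
          rw [setLIntegral_const]
      _ ≤ ∫⁻ y in S, ENNReal.ofReal ((y - mid m)^2) ∂(R (mid m)) :=
          setLIntegral_mono (((measurable_id.sub measurable_const).pow_const 2).ennreal_ofReal) hpt
      _ ≤ g m := setLIntegral_le_lintegral _ _
  -- compute the integral
  have hfin : IsFiniteMeasure μI := by
    constructor
    rw [hμI]
    simp only [Measure.smul_apply, Measure.coe_finset_sum, Finset.sum_apply,
      Measure.dirac_apply_of_mem (Set.mem_univ _), smul_eq_mul]
    simp only [Finset.sum_const, Nat.card_Icc, Nat.add_sub_cancel, nsmul_eq_mul, mul_one]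
    exact ENNReal.mul_lt_top (ENNReal.inv_lt_top.2 (by exact_mod_cast hk)) (ENNReal.natCast_lt_top _)
  have hmeasf : Measurable fun p : ℝ × ℝ => ENNReal.ofReal ((p.2 - p.1)^2) :=
    ((measurable_snd.sub measurable_fst).pow_const 2).ennreal_ofReal
  rw [integral_eq_lintegral_of_nonneg_ae (f := fun p : ℝ × ℝ => (p.2 - p.1) ^ 2)
      (Filter.Eventually.of_forall fun p => sq_nonneg _)
      ((continuous_snd.sub continuous_fst).pow 2).aestronglyMeasurable]
  rw [Measure.lintegral_compProd hmeasf]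
  rw [hμI, lintegral_smul_measure, lintegral_finset_sum_measure]
  simp only [lintegral_dirac, smul_eq_mul]
  rw [ENNReal.toReal_mul, ENNReal.toReal_sum hgne, ENNReal.toReal_inv, ENNReal.toReal_natCast,
    Finset.mul_sum]
  apply Finset.sum_le_sum
  intro m hm
  apply le_trans (min_le_left _ _)
  have hple : R (mid m) (intv m) ≤ 1 := prob_le_one
  have hle := ENNReal.toReal_mono (hgne m hm) (hglb m hm)
  rw [ENNReal.toReal_mul, ENNReal.toReal_ofReal (by positivity),
    ENNReal.toReal_sub_of_le hple ENNReal.one_ne_top, ENNReal.toReal_one] at hle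
  calc (1 - (R (mid m) (intv m)).toReal) / (4 * (k:ℝ)^3)
      = (k:ℝ)⁻¹ * (1/(4*(k:ℝ)^2) * (1 - (R (mid m) (intv m)).toReal)) := by
        field_simp
    _ ≤ (k:ℝ)⁻¹ * (g m).toReal := by
        apply mul_le_mul_of_nonneg_left hle (by positivity)
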